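/- If A_1,…,A_N : U → M_2(ℂ) satisfy the Schlesinger system, then the Hamiltonians H_i := (1/2) Σ_{j≠i} tr(A_i A_j)/(λ_j − λ_i) satisfy ∂H_i/∂λ_j = ∂H_j/∂λ_i for all i, j; in particular the 1-form Σ_i H_i dλ_i is closed, so the defining equations ∂(ln τ)/∂λ_j = H_j of the τ-function are compatible. -/

import Mathlib

open Matrix

attribute [local instance] Matrix.normedAddCommGroup Matrix.normedSpace

/-- The (2×2) Schlesinger system at a point `x = (λ_1,…,λ_N)`:
`∂A_j/∂λ_i = [A_j, A_i]/(λ_j − λ_i)` for `i ≠ j` and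
`∂A_j/∂λ_j = −Σ_{i≠j} [A_j, A_i]/(λ_j − λ_i)`. -/
def IsSchlesingerAt {N : ℕ} (A : Fin N → (Fin N → ℂ) → Matrix (Fin 2) (Fin 2) ℂ)
    (x : Fin N → ℂ) : Prop :=
  (∀ i j : Fin N, i ≠ j →
      fderiv ℂ (A j) x (Pi.single i 1) =
        (x j - x i)⁻¹ • (A j x * A i x - A i x * A j x)) ∧
  ∀ j : Fin N,
    fderiv ℂ (A j) x (Pi.single j 1) =
      -∑ i ∈ Finset.univ.filter (· ≠ j),
        (x j - x i)⁻¹ • (A j x * A i x - A i x * A j x)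

noncomputable section SchlesingerAux

local notation "E2" => Matrix (Fin 2) (Fin 2) ℂ

def trR (C : E2) : E2 →L[ℂ] ℂ :=
  LinearMap.toContinuousLinearMap
    { toFun := fun X => trace (X * C)
      map_add' := by intro X Y; simp [add_mul]
      map_smul' := by intro c X; simp [smul_mul_assoc] }

def trL (C : E2) : E2 →L[ℂ] ℂ :=
  LinearMap.toContinuousLinearMap
    { toFun := fun X => trace (C * X)
      map_add' := by intro X Y; simp [mul_add]
      map_smul' := by intro c X; simp [mul_smul_comm] }

@[simp] lemma trR_apply (C X : E2) : trR C X = trace (X * C) := rfl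
@[simp] lemma trL_apply (C X : E2) : trL C X = trace (C * X) := rfl

variable {N : ℕ}

lemma tracemul_hasFDerivAt {f g : (Fin N → ℂ) → E2} {f' g' : (Fin N → ℂ) →L[ℂ] E2}
    {x : Fin N → ℂ} (hf : HasFDerivAt f f' x) (hg : HasFDerivAt g g' x) :
    HasFDerivAt (fun y => trace (f y * g y)) ((trR (g x)).comp f' + (trL (f x)).comp g') x := by
  have hfe : ∀ a b : Fin 2, HasFDerivAt (fun y => f y a b)
      ((ContinuousLinearMap.proj b).comp ((ContinuousLinearMap.proj a).comp f')) x :=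
    fun a b => hasFDerivAt_pi'.1 (hasFDerivAt_pi'.1 hf a) b
  have hge : ∀ a b : Fin 2, HasFDerivAt (fun y => g y a b)
      ((ContinuousLinearMap.proj b).comp ((ContinuousLinearMap.proj a).comp g')) x :=
    fun a b => hasFDerivAt_pi'.1 (hasFDerivAt_pi'.1 hg a) b
  have hrepr : (fun y => trace (f y * g y)) =
      fun y => ∑ a : Fin 2, ∑ b : Fin 2, f y a b * g y b a := by
    funext y; simp [Matrix.trace, Matrix.diag, Matrix.mul_apply]
  rw [hrepr]
  have hsum : HasFDerivAt (fun y => ∑ a : Fin 2, ∑ b : Fin 2, f y a b * g y b a)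
      (∑ a : Fin 2, ∑ b : Fin 2,
        (f x a b • ((ContinuousLinearMap.proj a).comp ((ContinuousLinearMap.proj b).comp g')) +
         g x b a • ((ContinuousLinearMap.proj b).comp ((ContinuousLinearMap.proj a).comp f')))) x := by
    apply HasFDerivAt.fun_sum; intro a _
    apply HasFDerivAt.fun_sum; intro b _
    exact (hfe a b).mul (hge b a)
  convert hsum using 1
  ext w
  simp only [ContinuousLinearMap.add_apply, ContinuousLinearMap.comp_apply,
    ContinuousLinearMap.coe_sum', Finset.sum_apply, ContinuousLinearMap.smul_apply,
    ContinuousLinearMap.proj_apply, smul_eq_mul, trR_apply, trL_apply]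
  rw [Matrix.trace, Matrix.trace]
  simp only [Matrix.diag, Matrix.mul_apply, Finset.sum_add_distrib]
  rw [add_comm]
  congr 1
  exact Finset.sum_congr rfl fun a _ => Finset.sum_congr rfl fun b _ => mul_comm _ _

lemma hasFDerivAt_div' {α : Type*} [NormedAddCommGroup α] [NormedSpace ℂ α]
    {n d : α → ℂ} {x : α} {n' d' : α →L[ℂ] ℂ}
    (hn : HasFDerivAt n n' x) (hd : HasFDerivAt d d' x) (h0 : d x ≠ 0) :
    HasFDerivAt (fun y => n y / d y)
      (((d x)^2)⁻¹ • ((d x) • n' - (n x) • d')) x := by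
  have hinv : HasFDerivAt (fun y => (d y)⁻¹) ((-((d x)^2)⁻¹) • d') x :=
    (hasDerivAt_inv h0).comp_hasFDerivAt x hd
  have h := hn.fun_mul hinv
  have hfun : (fun y => n y / d y) = fun y => n y * (d y)⁻¹ := by
    funext y; rw [div_eq_mul_inv]
  rw [hfun]
  refine h.congr_fderiv ?_
  ext w
  simp only [ContinuousLinearMap.smul_apply, ContinuousLinearMap.sub_apply,
    ContinuousLinearMap.add_apply, smul_eq_mul]
  field_simp
  ring

lemma cyc3 (P Q R : E2) : trace (P * (Q * R)) = trace (Q * (R * P)) := by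
  rw [trace_mul_comm, mul_assoc]

lemma key {U : Set (Fin N → ℂ)} (hU : IsOpen U)
    (hdist : ∀ x ∈ U, ∀ i j : Fin N, i ≠ j → x i ≠ x j)
    (A : Fin N → (Fin N → ℂ) → Matrix (Fin 2) (Fin 2) ℂ)
    (hA : ∀ j, DifferentiableOn ℂ (A j) U)
    (hSch : ∀ x ∈ U, IsSchlesingerAt A x)
    (H : Fin N → (Fin N → ℂ) → ℂ)
    (hH : ∀ i, ∀ y : Fin N → ℂ, H i y =
      (1 / 2) * ∑ j ∈ Finset.univ.filter (· ≠ i),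
        Matrix.trace (A i y * A j y) / (y j - y i))
    {x : Fin N → ℂ} (hx : x ∈ U) {i j : Fin N} (hij : j ≠ i) :
    fderiv ℂ (H i) x (Pi.single j 1) =
      -(trace (A i x * A j x) / (2 * (x j - x i)^2)) := by
  have hmem : U ∈ nhds x := hU.mem_nhds hx
  have dA : ∀ p, DifferentiableAt ℂ (A p) x := fun p => (hA p).differentiableAt hmem
  have hx0 : ∀ p q : Fin N, p ≠ q → x p - x q ≠ 0 :=
    fun p q h => sub_ne_zero.2 (hdist x hx p q h)
  obtain ⟨hS1, hS2⟩ := hSch x hx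
  -- the derivative CLMs
  set Dn : Fin N → ((Fin N → ℂ) →L[ℂ] ℂ) := fun k =>
    (trR (A k x)).comp (fderiv ℂ (A i) x) + (trL (A i x)).comp (fderiv ℂ (A k) x) with hDn
  set Dd : Fin N → ((Fin N → ℂ) →L[ℂ] ℂ) := fun k =>
    (ContinuousLinearMap.proj k : (Fin N → ℂ) →L[ℂ] ℂ) -
      (ContinuousLinearMap.proj i : (Fin N → ℂ) →L[ℂ] ℂ) with hDd
  set D : Fin N → ((Fin N → ℂ) →L[ℂ] ℂ) := fun k =>
    (((x k - x i))^2)⁻¹ • ((x k - x i) • Dn k - (trace (A i x * A k x)) • Dd k) with hD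
  have hdiv : ∀ k ∈ Finset.univ.filter (· ≠ i),
      HasFDerivAt (fun y => trace (A i y * A k y) / (y k - y i)) (D k) x := by
    intro k hk
    have hki : k ≠ i := by simpa using hk
    have hdk : HasFDerivAt (fun y : Fin N → ℂ => y k - y i) (Dd k) x :=
      ((ContinuousLinearMap.proj k : (Fin N → ℂ) →L[ℂ] ℂ).hasFDerivAt).sub
        ((ContinuousLinearMap.proj i : (Fin N → ℂ) →L[ℂ] ℂ).hasFDerivAt)
    exact hasFDerivAt_div' (tracemul_hasFDerivAt (dA i).hasFDerivAt (dA k).hasFDerivAt)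
      hdk (hx0 k i hki)
  have hsum : HasFDerivAt
      (fun y => ∑ k ∈ Finset.univ.filter (· ≠ i), trace (A i y * A k y) / (y k - y i))
      (∑ k ∈ Finset.univ.filter (· ≠ i), D k) x := HasFDerivAt.fun_sum hdiv
  have hHi : HasFDerivAt (H i)
      ((1/2 : ℂ) • ∑ k ∈ Finset.univ.filter (· ≠ i), D k) x := by
    have h2 := hsum.const_mul (1/2 : ℂ)
    have hfun : H i = fun y => (1/2 : ℂ) *
        ∑ k ∈ Finset.univ.filter (· ≠ i), trace (A i y * A k y) / (y k - y i) :=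
      funext fun y => hH i y
    rw [hfun]; exact h2
  rw [hHi.fderiv, ContinuousLinearMap.smul_apply, ContinuousLinearMap.sum_apply, smul_eq_mul]
  -- pointwise values of the direction
  have hvj : (Pi.single j 1 : Fin N → ℂ) j = 1 := Pi.single_eq_same j 1
  have hvi : (Pi.single j 1 : Fin N → ℂ) i = 0 := Pi.single_eq_of_ne (Ne.symm hij) 1
  -- generic application formula
  have happ : ∀ k, D k (Pi.single j 1) = ((x k - x i)^2)⁻¹ *
      ((x k - x i) * (trace (fderiv ℂ (A i) x (Pi.single j 1) * A k x)
          + trace (A i x * fderiv ℂ (A k) x (Pi.single j 1)))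
        - trace (A i x * A k x) * ((Pi.single j 1 : Fin N → ℂ) k
            - (Pi.single j 1 : Fin N → ℂ) i)) := by
    intro k
    simp only [hD, hDn, hDd, ContinuousLinearMap.smul_apply, ContinuousLinearMap.sub_apply,
      ContinuousLinearMap.add_apply, ContinuousLinearMap.comp_apply,
      ContinuousLinearMap.proj_apply, smul_eq_mul, trR_apply, trL_apply]
  -- Schlesinger values
  have hDfi : fderiv ℂ (A i) x (Pi.single j 1)
      = (x i - x j)⁻¹ • (A i x * A j x - A j x * A i x) := hS1 j i hij
  -- terms with k ≠ j
  have hterm2 : ∀ k ∈ (Finset.univ.filter (· ≠ i)).erase j,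
      D k (Pi.single j 1) = (x j - x i)⁻¹ * ((x j - x k)⁻¹ *
        (trace (A i x * (A j x * A k x)) - trace (A i x * (A k x * A j x)))) := by
    intro k hk
    obtain ⟨hkj, hkS⟩ := Finset.mem_erase.1 hk
    have hki : k ≠ i := by simpa using hkS
    have e0 : (Pi.single j 1 : Fin N → ℂ) k - (Pi.single j 1 : Fin N → ℂ) i = 0 := by
      rw [Pi.single_eq_of_ne hkj, hvi]; ring
    have eA : trace (((x i - x j)⁻¹ • (A i x * A j x - A j x * A i x)) * A k x)
        = (x i - x j)⁻¹ * (trace (A i x * (A j x * A k x))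
            - trace (A i x * (A k x * A j x))) := by
      rw [smul_mul_assoc, trace_smul, sub_mul, trace_sub, mul_assoc, mul_assoc,
        cyc3 (A j x) (A i x) (A k x), smul_eq_mul]
    have eB : trace (A i x * ((x k - x j)⁻¹ • (A k x * A j x - A j x * A k x)))
        = (x k - x j)⁻¹ * (trace (A i x * (A k x * A j x))
            - trace (A i x * (A j x * A k x))) := by
      rw [mul_smul_comm, trace_smul, mul_sub, trace_sub, smul_eq_mul]
    rw [happ k, hDfi, hS1 j k (Ne.symm hkj), e0, eA, eB]
    have n1 : x i - x j ≠ 0 := hx0 i j (Ne.symm hij)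
    have n2 : x k - x j ≠ 0 := hx0 k j hkj
    have n3 : x k - x i ≠ 0 := hx0 k i hki
    have n4 : x j - x i ≠ 0 := hx0 j i hij
    have n5 : x j - x k ≠ 0 := hx0 j k (Ne.symm hkj)
    field_simp
    ring
  -- the k = j term
  have hzero1 : trace (((x i - x j)⁻¹ • (A i x * A j x - A j x * A i x)) * A j x) = 0 := by
    rw [smul_mul_assoc, trace_smul, sub_mul, trace_sub,
      mul_assoc (A i x) (A j x) (A j x), mul_assoc (A j x) (A i x) (A j x),
      cyc3 (A j x) (A i x) (A j x), sub_self, smul_zero]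
  have hinner : trace (A i x * (fderiv ℂ (A j) x (Pi.single j 1)))
      = -∑ m ∈ Finset.univ.filter (· ≠ j), (x j - x m)⁻¹ *
          (trace (A i x * (A j x * A m x)) - trace (A i x * (A m x * A j x))) := by
    rw [hS2 j, mul_neg, trace_neg, Finset.mul_sum, trace_sum]
    congr 1
    refine Finset.sum_congr rfl fun m _ => ?_
    rw [mul_smul_comm, trace_smul, mul_sub, trace_sub, smul_eq_mul]
  have hzero2 : trace (A i x * (A j x * A i x)) - trace (A i x * (A i x * A j x)) = 0 := by
    rw [cyc3 (A i x) (A j x) (A i x), cyc3 (A j x) (A i x) (A i x), sub_self]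
  have hiT : i ∈ Finset.univ.filter (· ≠ j) := by simp [Ne.symm hij]
  have hsets : (Finset.univ.filter (· ≠ j)).erase i = (Finset.univ.filter (· ≠ i)).erase j := by
    ext p
    simp only [Finset.mem_erase, Finset.mem_filter, Finset.mem_univ, true_and]
    tauto
  have n4 : x j - x i ≠ 0 := hx0 j i hij
  have htermj : D j (Pi.single j 1) = -(trace (A i x * A j x) * ((x j - x i)^2)⁻¹)
      - (x j - x i)⁻¹ * ∑ k ∈ (Finset.univ.filter (· ≠ i)).erase j, (x j - x k)⁻¹ *
          (trace (A i x * (A j x * A k x)) - trace (A i x * (A k x * A j x))) := by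
    rw [happ j, hDfi, hzero1, hinner, hvj, hvi,
      ← Finset.sum_erase_add (Finset.univ.filter (· ≠ j)) _ hiT, hzero2, hsets]
    field_simp
    ring
  have hjS : j ∈ Finset.univ.filter (· ≠ i) := by simp [hij]
  rw [← Finset.sum_erase_add (Finset.univ.filter (· ≠ i)) _ hjS,
    Finset.sum_congr rfl hterm2, htermj, ← Finset.mul_sum]
  generalize (∑ k ∈ (Finset.univ.filter (· ≠ i)).erase j, (x j - x k)⁻¹ *
      (trace (A i x * (A j x * A k x)) - trace (A i x * (A k x * A j x)))) = Q
  generalize trace (A i x * A j x) = T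
  revert n4
  generalize x j - x i = a
  intro n4
  field_simp
  ring

end SchlesingerAux

/-- If `A_1,…,A_N` satisfy the Schlesinger system, then the Hamiltonians
`H_i = (1/2) Σ_{j≠i} tr(A_i A_j)/(λ_j − λ_i)` satisfy `∂H_i/∂λ_j = ∂H_j/∂λ_i` for all
`i, j`; in particular the 1-form `Σ_i H_i dλ_i` is closed, so the defining equations
`∂(ln τ)/∂λ_j = H_j` of the τ-function are compatible. -/
theorem hamiltonians_closed_one_form (N : ℕ) (hN : 2 ≤ N)
    (U : Set (Fin N → ℂ)) (hU : IsOpen U)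
    (hdist : ∀ x ∈ U, ∀ i j : Fin N, i ≠ j → x i ≠ x j)
    (A : Fin N → (Fin N → ℂ) → Matrix (Fin 2) (Fin 2) ℂ)
    (hA : ∀ j, DifferentiableOn ℂ (A j) U)
    (hSch : ∀ x ∈ U, IsSchlesingerAt A x)
    (H : Fin N → (Fin N → ℂ) → ℂ)
    (hH : ∀ i, ∀ y : Fin N → ℂ, H i y =
      (1 / 2) * ∑ j ∈ Finset.univ.filter (· ≠ i),
        Matrix.trace (A i y * A j y) / (y j - y i)) :
    ∀ x ∈ U, ∀ i j : Fin N,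
      fderiv ℂ (H i) x (Pi.single j 1) = fderiv ℂ (H j) x (Pi.single i 1) := by
  intro x hx i j
  rcases eq_or_ne i j with rfl | hij
  · rfl
  · rw [key hU hdist A hA hSch H hH hx (Ne.symm hij),
        key hU hdist A hA hSch H hH hx hij, trace_mul_comm]
    have h2 : (x j - x i)^2 = (x i - x j)^2 := by ring
    rw [h2]
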